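/- Let Ψ : (0, ∞) → (0, ∞) be an increasing function such that lim_{x→∞} Ψ(x)/Ψ(x−1) = ∞. Then limsup_{n→∞} Ψ(n) · Σ_{k=n+1}^∞ 1/Ψ(k) ≤ 1. -/

import Mathlib

open Filter
open scoped Topology

/-- If `Ψ : (0,∞) → (0,∞)` is increasing with `Ψ(x)/Ψ(x−1) → ∞` as `x → ∞`, then
`limsup_{n→∞} Ψ(n) · Σ_{k=n+1}^∞ 1/Ψ(k) ≤ 1`. -/
theorem limsup_mul_tsum_inv_succ_le_one_of_superexp
    (Ψ : ℝ → ℝ) (hpos : ∀ x > (0 : ℝ), 0 < Ψ x)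
    (hmono : StrictMonoOn Ψ (Set.Ioi 0))
    (hsuper : Tendsto (fun x : ℝ => Ψ x / Ψ (x - 1)) atTop atTop) :
    Filter.limsup (fun n : ℕ =>
        Ψ n * ∑' k : ℕ, 1 / Ψ ((n + 1 + k : ℕ) : ℝ)) atTop ≤ 1 := by
  set f : ℕ → ℝ := fun n => Ψ n * ∑' k : ℕ, 1 / Ψ ((n + 1 + k : ℕ) : ℝ) with hf
  -- f is eventually nonnegative
  have hnonneg : ∀ n : ℕ, 1 ≤ n → 0 ≤ f n := by
    intro n hn
    have hΨn : 0 < Ψ n := hpos _ (by exact_mod_cast hn)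
    have : 0 ≤ ∑' k : ℕ, 1 / Ψ ((n + 1 + k : ℕ) : ℝ) := by
      apply tsum_nonneg
      intro k
      have h2 : (0:ℝ) < ((n + 1 + k : ℕ) : ℝ) := by positivity
      have := hpos _ h2
      positivity
    positivity
  have hcob : IsCoboundedUnder (· ≤ ·) atTop f :=
    isCoboundedUnder_le_of_eventually_le atTop
      (eventually_atTop.2 ⟨1, hnonneg⟩)
  -- main: limsup ≤ 1 + ε for all ε > 0
  refine le_of_forall_pos_le_add ?_
  intro ε hε
  refine limsup_le_of_le hcob ?_
  -- choose M with 1/(M-1) ≤ ε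
  set M : ℝ := 1 / ε + 1 with hM
  have hM1 : 1 < M := by
    have : 0 < 1 / ε := by positivity
    rw [hM]; linarith
  obtain ⟨N, hN⟩ := eventually_atTop.1 ((tendsto_atTop.1 hsuper) M)
  rw [eventually_atTop]
  refine ⟨max 1 ⌈N⌉₊, ?_⟩
  intro n hn
  have hn1 : 1 ≤ n := le_trans (le_max_left _ _) hn
  have hnN : (N : ℝ) ≤ n := le_trans (Nat.le_ceil N) (by exact_mod_cast le_trans (le_max_right _ _) hn)
  have hΨn : 0 < Ψ n := hpos _ (by exact_mod_cast hn1)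
  -- key: Ψ n * M^(k+1) ≤ Ψ (n+1+k)
  have key : ∀ k : ℕ, Ψ n * M ^ (k + 1) ≤ Ψ ((n + 1 + k : ℕ) : ℝ) := by
    intro k
    induction k with
    | zero =>
      have h1 : M ≤ Ψ ((n:ℝ) + 1) / Ψ ((n:ℝ) + 1 - 1) := by
        have := hN ((n:ℝ) + 1) (by linarith)
        simpa using this
      have h2 : ((n:ℝ) + 1 - 1) = (n:ℝ) := by ring
      rw [h2] at h1
      have := (le_div_iff₀ hΨn).1 h1
      push_cast
      simpa [mul_comm] using this
    | succ k ih =>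
      have hk1 : (N:ℝ) ≤ ((n + 1 + (k+1) : ℕ) : ℝ) := by push_cast; linarith
      have hprev : (0:ℝ) < ((n + 1 + (k+1) : ℕ) : ℝ) - 1 := by
        push_cast
        have : (0:ℝ) ≤ (n:ℝ) := Nat.cast_nonneg n
        linarith
      have hΨprev : 0 < Ψ (((n + 1 + (k+1) : ℕ) : ℝ) - 1) := hpos _ hprev
      have h1 : M ≤ Ψ ((n + 1 + (k+1) : ℕ) : ℝ) / Ψ (((n + 1 + (k+1) : ℕ) : ℝ) - 1) :=
        hN _ hk1
      have heq : ((n + 1 + (k+1) : ℕ) : ℝ) - 1 = ((n + 1 + k : ℕ) : ℝ) := by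
        push_cast; ring
      rw [heq] at h1 hΨprev
      have h3 : Ψ ((n + 1 + k : ℕ) : ℝ) * M ≤ Ψ ((n + 1 + (k+1) : ℕ) : ℝ) := by
        have := (le_div_iff₀ hΨprev).1 h1
        linarith [this]
      calc Ψ n * M ^ (k + 1 + 1) = (Ψ n * M ^ (k+1)) * M := by ring
        _ ≤ Ψ ((n + 1 + k : ℕ) : ℝ) * M := by
            apply mul_le_mul_of_nonneg_right ih (by linarith)
        _ ≤ _ := h3
  have hΨpos : ∀ k : ℕ, 0 < Ψ ((n + 1 + k : ℕ) : ℝ) := by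
    intro k
    apply hpos
    have : (0:ℝ) < ((n + 1 + k : ℕ) : ℝ) := by positivity
    exact this
  have hM0 : (0:ℝ) < M := by linarith
  have hr0 : (0:ℝ) ≤ 1/M := div_nonneg zero_le_one hM0.le
  have hr1 : 1/M < 1 := by rw [div_lt_iff₀ hM0]; linarith
  have hbound : ∀ k : ℕ, 1 / Ψ ((n + 1 + k : ℕ) : ℝ) ≤ (1/M)^(k+1) / Ψ n := by
    intro k
    have hMk : (0:ℝ) < M ^ (k+1) := pow_pos hM0 _
    have heq : (1/M)^(k+1) / Ψ n = 1 / (Ψ n * M^(k+1)) := by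
      rw [one_div, inv_pow]; field_simp
    rw [heq]
    exact one_div_le_one_div_of_le (by positivity) (key k)
  have hgeo : Summable (fun k : ℕ => (1/M)^(k+1) / Ψ n) := by
    have h0 : Summable (fun k : ℕ => (1/M)^k) := summable_geometric_of_lt_one hr0 hr1
    exact ((h0.mul_left (1/M)).congr (fun k => by ring)).div_const _
  have hsum : Summable (fun k : ℕ => 1 / Ψ ((n + 1 + k : ℕ) : ℝ)) :=
    Summable.of_nonneg_of_le (fun k => le_of_lt (div_pos one_pos (hΨpos k))) hbound hgeo
  have htsum_le : ∑' k : ℕ, 1 / Ψ ((n + 1 + k : ℕ) : ℝ) ≤ ∑' k : ℕ, (1/M)^(k+1) / Ψ n :=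
    Summable.tsum_le_tsum hbound hsum hgeo
  have hgeo_val : ∑' k : ℕ, (1/M)^(k+1) / Ψ n = (1/(M-1)) / Ψ n := by
    rw [tsum_div_const]
    congr 1
    have hr : |1/M| < 1 := by
      rw [abs_of_pos (by positivity)]
      rw [div_lt_iff₀ (by linarith : (0:ℝ) < M)]; linarith
    calc ∑' k : ℕ, (1/M)^(k+1) = (1/M) * ∑' k : ℕ, (1/M)^k := by
          rw [← tsum_mul_left]
          congr 1; ext k; ring
      _ = (1/M) * (1 - 1/M)⁻¹ := by rw [tsum_geometric_of_abs_lt_one hr]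
      _ = 1/(M-1) := by
          field_simp
  have : f n ≤ 1/(M-1) := by
    rw [hf]
    calc Ψ n * ∑' k : ℕ, 1 / Ψ ((n + 1 + k : ℕ) : ℝ)
        ≤ Ψ n * ((1/(M-1)) / Ψ n) := by
          apply mul_le_mul_of_nonneg_left _ hΨn.le
          rw [← hgeo_val]; exact htsum_le
      _ = 1/(M-1) := by
          field_simp
  have hMe : 1/(M-1) = ε := by
    rw [hM]; field_simp; ring
  linarith [this]
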